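/- Let N be a positive integer, V=[N], A⊆{unordered pairs of V}, and d a nonnegative integer sequence of length N. Let a,v,b be distinct elements of V with av,bv∈A. If d−e_a−e_v is A-realisable and P_{av}(d−e_a−e_v) ≠ 1, and N(d)>0, then Y_{avb}(d) = P_{av}(d) · ( P_{bv}(d−e_a−e_v) − Y_{avb}(d−e_a−e_v) ) / ( 1 − P_{av}(d−e_a−e_v) ). -/

import Mathlib

open scoped Classical

/-- Degree of vertex `i` in the edge set `E`. -/
noncomputable def degC {N : ℕ} (E : Finset (Sym2 (Fin N))) (i : Fin N) : ℕ :=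
  (E.filter (fun e => i ∈ e)).card

/-- `N(d)`: the number of simple graphs on `[N]` with all edges in the allowable set `A`
realising the (integer) degree sequence `d`. -/
noncomputable def Ncnt (N : ℕ) (A : Set (Sym2 (Fin N))) (d : Fin N → ℤ) : ℕ :=
  Nat.card {E : Finset (Sym2 (Fin N)) //
    ↑E ⊆ A ∧ (∀ e ∈ E, ¬ e.IsDiag) ∧ ∀ i, (degC E i : ℤ) = d i}

/-- `N_F(d)`: the number of such graphs whose edge set contains `F`. -/
noncomputable def NcntF (N : ℕ) (A : Set (Sym2 (Fin N))) (F : Finset (Sym2 (Fin N)))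
    (d : Fin N → ℤ) : ℕ :=
  Nat.card {E : Finset (Sym2 (Fin N)) //
    F ⊆ E ∧ ↑E ⊆ A ∧ (∀ e ∈ E, ¬ e.IsDiag) ∧ ∀ i, (degC E i : ℤ) = d i}

/-- `P_{av}(d) = N_{av}(d)/N(d)`. -/
noncomputable def Pedge (N : ℕ) (A : Set (Sym2 (Fin N))) (a v : Fin N) (d : Fin N → ℤ) : ℝ :=
  (NcntF N A {s(a, v)} d : ℝ) / (Ncnt N A d : ℝ)

/-- The elementary unit vector `e_i`. -/
def unitV {N : ℕ} (i : Fin N) : Fin N → ℤ := fun j => if j = i then 1 else 0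

/-- `R_{ab}(d) = N(d - e_a)/N(d - e_b)`. -/
noncomputable def Rrat (N : ℕ) (A : Set (Sym2 (Fin N))) (a b : Fin N) (d : Fin N → ℤ) : ℝ :=
  (Ncnt N A (d - unitV a) : ℝ) / (Ncnt N A (d - unitV b) : ℝ)

/-- `Y_{avb}(d) = P_{{av,bv}}(d)`, the probability of the 2-path `avb`. -/
noncomputable def Ypath (N : ℕ) (A : Set (Sym2 (Fin N))) (a v b : Fin N) (d : Fin N → ℤ) : ℝ :=
  (NcntF N A {s(a, v), s(b, v)} d : ℝ) / (Ncnt N A d : ℝ)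

lemma ncnt_eq (N : ℕ) (A : Set (Sym2 (Fin N))) (d : Fin N → ℤ) :
    Ncnt N A d = (Finset.univ.filter (fun E : Finset (Sym2 (Fin N)) =>
      ↑E ⊆ A ∧ (∀ e ∈ E, ¬ e.IsDiag) ∧ ∀ i, (degC E i : ℤ) = d i)).card := by
  rw [Ncnt, Nat.card_eq_fintype_card, Fintype.card_subtype]

lemma ncntF_eq (N : ℕ) (A : Set (Sym2 (Fin N))) (F : Finset (Sym2 (Fin N))) (d : Fin N → ℤ) :
    NcntF N A F d = (Finset.univ.filter (fun E : Finset (Sym2 (Fin N)) =>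
      F ⊆ E ∧ ↑E ⊆ A ∧ (∀ e ∈ E, ¬ e.IsDiag) ∧ ∀ i, (degC E i : ℤ) = d i)).card := by
  rw [NcntF, Nat.card_eq_fintype_card, Fintype.card_subtype]

lemma ncntF_empty (N : ℕ) (A : Set (Sym2 (Fin N))) (d : Fin N → ℤ) :
    NcntF N A ∅ d = Ncnt N A d := by
  rw [ncnt_eq, ncntF_eq]
  congr 1
  apply Finset.filter_congr
  intro E _
  simp

lemma degC_insert {N : ℕ} {a v : Fin N} {E : Finset (Sym2 (Fin N))}
    (hs : s(a, v) ∉ E) (i : Fin N) :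
    degC (insert s(a, v) E) i = degC E i + (if i = a ∨ i = v then 1 else 0) := by
  unfold degC
  rw [Finset.filter_insert]
  by_cases h : i ∈ s(a, v)
  · rw [if_pos h, Finset.card_insert_of_notMem (fun hm => hs (Finset.mem_filter.mp hm).1)]
    rw [Sym2.mem_iff] at h
    rw [if_pos h]
  · rw [if_neg h]
    rw [Sym2.mem_iff] at h
    rw [if_neg h]
    ring

lemma deg_iff {N : ℕ} {a v : Fin N} (hav : a ≠ v) {E : Finset (Sym2 (Fin N))}
    (hs : s(a, v) ∉ E) (d : Fin N → ℤ) :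
    (∀ i, (degC (insert s(a, v) E) i : ℤ) = d i) ↔
      ∀ i, (degC E i : ℤ) = (d - unitV a - unitV v) i := by
  refine forall_congr' fun i => ?_
  rw [degC_insert hs i]
  simp only [Pi.sub_apply, unitV]
  push_cast
  by_cases h1 : i = a <;> by_cases h2 : i = v
  · exact absurd (h1 ▸ h2) hav
  all_goals simp [h1, h2] <;> omega

lemma key_lemma (N : ℕ) (A : Set (Sym2 (Fin N))) {a v : Fin N} (hav : a ≠ v)
    (hA : s(a, v) ∈ A) (F : Finset (Sym2 (Fin N))) (hF : s(a, v) ∉ F) (d : Fin N → ℤ) :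
    NcntF N A (insert s(a, v) F) d
      + NcntF N A (insert s(a, v) F) (d - unitV a - unitV v)
      = NcntF N A F (d - unitV a - unitV v) := by
  set s : Sym2 (Fin N) := s(a, v) with hsdef
  set d' : Fin N → ℤ := d - unitV a - unitV v with hd'
  have hdiag : ¬ s.IsDiag := by simp [hsdef, hav]
  -- Step A : bijection
  have stepA : NcntF N A (insert s F) d =
      (Finset.univ.filter (fun E : Finset (Sym2 (Fin N)) =>
        (F ⊆ E ∧ ↑E ⊆ A ∧ (∀ e ∈ E, ¬ e.IsDiag) ∧ ∀ i, (degC E i : ℤ) = d' i) ∧ ¬ s ∈ E)).card := by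
    rw [ncntF_eq]
    apply Finset.card_nbij' (i := fun E => E.erase s) (j := fun E => insert s E)
    · intro E hE
      simp only [Finset.mem_coe, Finset.mem_filter, Finset.mem_univ, true_and] at hE ⊢
      obtain ⟨hsub, hAE, hdg, hdeg⟩ := hE
      have hsE : s ∈ E := hsub (Finset.mem_insert_self _ _)
      have hFe : F ⊆ E.erase s := Finset.subset_erase.mpr
        ⟨(Finset.insert_subset_iff.mp hsub).2, hF⟩
      have hsne : s ∉ E.erase s := Finset.notMem_erase _ _
      have hins : insert s (E.erase s) = E := Finset.insert_erase hsE
      refine ⟨⟨hFe, ?_, ?_, ?_⟩, hsne⟩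
      · exact fun e he => hAE (Finset.erase_subset _ _ he)
      · exact fun e he => hdg e (Finset.erase_subset _ _ he)
      · have := (deg_iff hav hsne d).mp (by rw [hins]; exact hdeg)
        exact this
    · intro E hE
      simp only [Finset.mem_coe, Finset.mem_filter, Finset.mem_univ, true_and] at hE ⊢
      obtain ⟨⟨hFE, hAE, hdg, hdeg⟩, hsE⟩ := hE
      refine ⟨Finset.insert_subset_iff.mpr ⟨Finset.mem_insert_self _ _,
        hFE.trans (Finset.subset_insert _ _)⟩, ?_, ?_, ?_⟩
      · rw [Finset.coe_insert]
        exact Set.insert_subset hA hAE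
      · intro e he
        rcases Finset.mem_insert.mp he with h | h
        · exact h ▸ hdiag
        · exact hdg e h
      · exact (deg_iff hav hsE d).mpr hdeg
    · intro E hE
      simp only [Finset.mem_coe, Finset.mem_filter, Finset.mem_univ, true_and] at hE
      exact Finset.insert_erase (hE.1 (Finset.mem_insert_self _ _))
    · intro E hE
      simp only [Finset.mem_coe, Finset.mem_filter, Finset.mem_univ, true_and] at hE
      exact Finset.erase_insert hE.2
  -- Step B : splitting
  have h2 : NcntF N A (insert s F) d' =
      (Finset.univ.filter (fun E : Finset (Sym2 (Fin N)) =>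
        (F ⊆ E ∧ ↑E ⊆ A ∧ (∀ e ∈ E, ¬ e.IsDiag) ∧ ∀ i, (degC E i : ℤ) = d' i) ∧ s ∈ E)).card := by
    rw [ncntF_eq]
    apply congrArg Finset.card
    apply Finset.filter_congr
    intro E _
    simp only [Finset.insert_subset_iff]
    tauto
  have stepB := Finset.card_filter_add_card_filter_not
    (s := Finset.univ.filter (fun E : Finset (Sym2 (Fin N)) =>
      F ⊆ E ∧ ↑E ⊆ A ∧ (∀ e ∈ E, ¬ e.IsDiag) ∧ ∀ i, (degC E i : ℤ) = d' i))
    (p := fun E => s ∈ E)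
  rw [Finset.filter_filter, Finset.filter_filter] at stepB
  rw [stepA, h2, ncntF_eq N A F d']
  omega

/-- Recursive relation for the 2-path probability `Y_{avb}(d)` (Proposition 3.1(c)). -/
theorem stmt_15 (N : ℕ) (hN : 0 < N) (A : Set (Sym2 (Fin N))) (d : Fin N → ℤ)
    (hd : ∀ i, 0 ≤ d i) (a v b : Fin N)
    (hab : a ≠ b) (hav : a ≠ v) (hbv : b ≠ v)
    (hA1 : s(a, v) ∈ A) (hA2 : s(b, v) ∈ A)
    (hrea : 0 < Ncnt N A (d - unitV a - unitV v))
    (hP : Pedge N A a v (d - unitV a - unitV v) ≠ 1)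
    (hN0 : 0 < Ncnt N A d) :
    Ypath N A a v b d =
      Pedge N A a v d *
        (Pedge N A b v (d - unitV a - unitV v) - Ypath N A a v b (d - unitV a - unitV v)) /
        (1 - Pedge N A a v (d - unitV a - unitV v)) := by
  have hne : s(a, v) ∉ ({s(b, v)} : Finset (Sym2 (Fin N))) := by
    simp only [Finset.mem_singleton, Sym2.eq_iff]
    push_neg
    exact ⟨fun h => absurd h hab, fun h => absurd h hav⟩
  have h1 := key_lemma N A hav hA1 ∅ (Finset.notMem_empty _) d
  rw [ncntF_empty] at h1
  have h2 := key_lemma N A hav hA1 {s(b, v)} hne d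
  -- real-number abbreviations
  set n : ℝ := (Ncnt N A d : ℝ) with hn
  set m : ℝ := (Ncnt N A (d - unitV a - unitV v) : ℝ) with hm
  set p : ℝ := (NcntF N A {s(a, v)} (d - unitV a - unitV v) : ℝ) with hp
  set q : ℝ := (NcntF N A {s(b, v)} (d - unitV a - unitV v) : ℝ) with hq
  set r : ℝ := (NcntF N A {s(a, v), s(b, v)} (d - unitV a - unitV v) : ℝ) with hr
  have hcast1 : (NcntF N A {s(a, v)} d : ℝ) = m - p := by
    rw [hm, hp]
    have : (NcntF N A (insert s(a, v) ∅) d : ℝ)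
        + (NcntF N A (insert s(a, v) ∅) (d - unitV a - unitV v) : ℝ)
        = (Ncnt N A (d - unitV a - unitV v) : ℝ) := by exact_mod_cast congrArg (Nat.cast : ℕ → ℝ) h1
    have hie : (insert s(a, v) (∅ : Finset (Sym2 (Fin N)))) = {s(a, v)} := rfl
    rw [hie] at this
    linarith
  have hcast2 : (NcntF N A {s(a, v), s(b, v)} d : ℝ) = q - r := by
    rw [hq, hr]
    have : (NcntF N A (insert s(a, v) {s(b, v)}) d : ℝ)
        + (NcntF N A (insert s(a, v) {s(b, v)}) (d - unitV a - unitV v) : ℝ)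
        = (NcntF N A {s(b, v)} (d - unitV a - unitV v) : ℝ) := by
      exact_mod_cast congrArg (Nat.cast : ℕ → ℝ) h2
    have hins : (insert s(a, v) {s(b, v)} : Finset (Sym2 (Fin N))) = {s(a, v), s(b, v)} := rfl
    rw [hins] at this
    linarith
  have hn0 : n ≠ 0 := by
    rw [hn]; exact Nat.cast_ne_zero.mpr hN0.ne'
  have hm0 : m ≠ 0 := by
    rw [hm]; exact Nat.cast_ne_zero.mpr hrea.ne'
  have hmp : m - p ≠ 0 := by
    intro h
    apply hP
    unfold Pedge
    rw [← hp, ← hm]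
    rw [sub_eq_zero] at h
    rw [← h, div_self hm0]
  unfold Ypath Pedge
  rw [hcast1, hcast2, ← hn, ← hm, ← hp, ← hq, ← hr]
  have h1m : 1 - p / m ≠ 0 := by
    rw [← div_self hm0, div_sub_div_same]
    exact div_ne_zero hmp hm0
  field_simp
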